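/- For all x > 0, 1/2 < x/tanh(x) − log(cosh(x))/tanh(x)² < log 2. -/

import Mathlib

open Real Set

lemma P_hasDeriv {t : ℝ} (h1 : -1 < t) (h2 : t < 1) :
    HasDerivAt (fun t : ℝ => Real.log (1+t) - Real.log (1-t) - 2*t)
      (1/(1+t) + 1/(1-t) - 2) t := by
  have p1 : (0:ℝ) < 1 + t := by linarith
  have p2 : (0:ℝ) < 1 - t := by linarith
  have d1 : HasDerivAt (fun t : ℝ => 1 + t) 1 t := by
    simpa using (hasDerivAt_id t).const_add 1
  have d2 : HasDerivAt (fun t : ℝ => 1 - t) (-1) t := by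
    simpa using (hasDerivAt_id t).const_sub 1
  have l1 := d1.log p1.ne'
  have l2 := d2.log p2.ne'
  have dl : HasDerivAt (fun t : ℝ => 2*t) 2 t := by
    simpa using (hasDerivAt_id t).const_mul 2
  have := (l1.sub l2).sub dl
  refine this.congr_deriv ?_
  field_simp
  ring

lemma P_pos {t : ℝ} (ht : t ∈ Ioo (0:ℝ) 1) :
    0 < Real.log (1+t) - Real.log (1-t) - 2*t := by
  set P : ℝ → ℝ := fun t => Real.log (1+t) - Real.log (1-t) - 2*t with hP
  have hcont : ContinuousOn P (Ico 0 1) := by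
    intro s hs
    have h1 : (-1:ℝ) < s := by linarith [hs.1]
    exact (P_hasDeriv h1 hs.2).continuousAt.continuousWithinAt
  have hmono : StrictMonoOn P (Ico 0 1) := by
    apply strictMonoOn_of_deriv_pos (convex_Ico 0 1) hcont
    intro s hs
    rw [interior_Ico] at hs
    obtain ⟨hs1, hs2⟩ := hs
    have h1 : (-1:ℝ) < s := by linarith
    rw [(P_hasDeriv h1 hs2).deriv]
    have p1 : (0:ℝ) < 1 + s := by linarith
    have p2 : (0:ℝ) < 1 - s := by linarith
    have key : 1/(1+s) + 1/(1-s) - 2 = 2*s^2/((1+s)*(1-s)) := by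
      field_simp
      ring
    rw [key]
    positivity
  have := hmono (by constructor <;> norm_num) (⟨ht.1.le, ht.2⟩ : t ∈ Ico (0:ℝ) 1) ht.1
  simpa [hP] using this

noncomputable def Gf : ℝ → ℝ := fun t => (1+t) * Real.log (1+t) + (1-t) * Real.log (1-t)

lemma Gf_cont : Continuous Gf := by
  have h1 : Continuous fun t : ℝ => (1+t) * Real.log (1+t) :=
    Real.continuous_mul_log.comp (continuous_const.add continuous_id)
  have h2 : Continuous fun t : ℝ => (1-t) * Real.log (1-t) :=
    Real.continuous_mul_log.comp (continuous_const.sub continuous_id)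
  exact h1.add h2

lemma Gf_hasDeriv {t : ℝ} (h1 : -1 < t) (h2 : t < 1) :
    HasDerivAt Gf (Real.log (1+t) - Real.log (1-t)) t := by
  have p1 : (0:ℝ) < 1 + t := by linarith
  have p2 : (0:ℝ) < 1 - t := by linarith
  have d1 : HasDerivAt (fun t : ℝ => 1 + t) 1 t := by
    simpa using (hasDerivAt_id t).const_add 1
  have d2 : HasDerivAt (fun t : ℝ => 1 - t) (-1) t := by
    simpa using (hasDerivAt_id t).const_sub 1
  have l1 := d1.log p1.ne'
  have l2 := d2.log p2.ne'
  have := (d1.mul l1).add (d2.mul l2)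
  refine this.congr_deriv ?_
  field_simp
  ring

lemma Gf_lower {t : ℝ} (ht : t ∈ Ioo (0:ℝ) 1) : t^2 < Gf t := by
  set D : ℝ → ℝ := fun t => Gf t - t^2 with hD
  have hcont : ContinuousOn D (Ico 0 1) :=
    (Gf_cont.sub (continuous_pow 2)).continuousOn
  have hmono : StrictMonoOn D (Ico 0 1) := by
    apply strictMonoOn_of_deriv_pos (convex_Ico 0 1) hcont
    intro s hs
    rw [interior_Ico] at hs
    obtain ⟨hs1, hs2⟩ := hs
    have h1 : (-1:ℝ) < s := by linarith
    have hd : HasDerivAt D (Real.log (1+s) - Real.log (1-s) - 2*s) s := by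
      have := (Gf_hasDeriv h1 hs2).sub (hasDerivAt_pow 2 s)
      refine this.congr_deriv ?_
      ring
    rw [hd.deriv]
    exact P_pos ⟨hs1, hs2⟩
  have := hmono (by constructor <;> norm_num) (⟨ht.1.le, ht.2⟩ : t ∈ Ico (0:ℝ) 1) ht.1
  have hD0 : D 0 = 0 := by simp [hD, Gf]
  rw [hD0] at this
  simpa [hD] using this

noncomputable def Ef : ℝ → ℝ := fun t => 2*Real.log 2*t^2 - Gf t
noncomputable def Ef' : ℝ → ℝ := fun t => 4*Real.log 2*t - (Real.log (1+t) - Real.log (1-t))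

lemma Ef_hasDeriv {t : ℝ} (h1 : -1 < t) (h2 : t < 1) : HasDerivAt Ef (Ef' t) t := by
  have hp : HasDerivAt (fun t : ℝ => 2*Real.log 2*t^2) (4*Real.log 2*t) t := by
    have := (hasDerivAt_pow 2 t).const_mul (2*Real.log 2)
    refine this.congr_deriv ?_
    ring
  have := hp.sub (Gf_hasDeriv h1 h2)
  exact this

lemma Ef'_hasDeriv {t : ℝ} (h1 : -1 < t) (h2 : t < 1) :
    HasDerivAt Ef' (4*Real.log 2 - (1/(1+t) + 1/(1-t))) t := by
  have p1 : (0:ℝ) < 1 + t := by linarith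
  have p2 : (0:ℝ) < 1 - t := by linarith
  have d1 : HasDerivAt (fun t : ℝ => 1 + t) 1 t := by
    simpa using (hasDerivAt_id t).const_add 1
  have d2 : HasDerivAt (fun t : ℝ => 1 - t) (-1) t := by
    simpa using (hasDerivAt_id t).const_sub 1
  have l1 := d1.log p1.ne'
  have l2 := d2.log p2.ne'
  have hp : HasDerivAt (fun t : ℝ => 4*Real.log 2*t) (4*Real.log 2) t := by
    simpa using (hasDerivAt_id t).const_mul (4*Real.log 2)
  have := hp.sub (l1.sub l2)
  refine this.congr_deriv ?_
  field_simp
  ring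

lemma hlog2 : (1:ℝ)/2 < Real.log 2 := by
  have := Real.log_two_gt_d9
  norm_num at this ⊢
  linarith

lemma Gf_upper {t : ℝ} (ht : t ∈ Ioo (0:ℝ) 1) : Gf t < 2*Real.log 2 * t^2 := by
  have hL : (1:ℝ)/2 < Real.log 2 := hlog2
  set c : ℝ := 1 - 1/(2*Real.log 2) with hc
  have h2L : (1:ℝ) < 2*Real.log 2 := by linarith
  have hc0 : 0 < c := by
    have : 1/(2*Real.log 2) < 1 := by
      rw [div_lt_one (by linarith)]
      linarith
    simp only [hc]; linarith
  have hc1 : c < 1 := by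
    have : 0 < 1/(2*Real.log 2) := by positivity
    simp only [hc]; linarith
  set t0 : ℝ := Real.sqrt c with ht0def
  have ht0 : 0 < t0 := Real.sqrt_pos.2 hc0
  have ht01 : t0 < 1 := by
    rw [ht0def, show (1:ℝ) = Real.sqrt 1 from (Real.sqrt_one).symm]
    exact Real.sqrt_lt_sqrt hc0.le hc1
  have ht0sq : t0^2 = c := Real.sq_sqrt hc0.le
  have h4L2 : 4*Real.log 2*(1/(2*Real.log 2)) = 2 := by
    field_simp
    ring
  -- Ef' positive on Ioo 0 t0 (closed: Icc strict mono)
  have hE'mono : StrictMonoOn Ef' (Icc 0 t0) := by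
    apply strictMonoOn_of_deriv_pos (convex_Icc 0 t0)
    · intro s hs
      have h1 : (-1:ℝ) < s := by linarith [hs.1]
      have h2 : s < 1 := by linarith [hs.2]
      exact (Ef'_hasDeriv h1 h2).continuousAt.continuousWithinAt
    · intro s hs
      rw [interior_Icc] at hs
      obtain ⟨hs1, hs2⟩ := hs
      have h2 : s < 1 := by linarith
      have h1 : (-1:ℝ) < s := by linarith
      rw [(Ef'_hasDeriv h1 h2).deriv]
      have p1 : (0:ℝ) < 1 + s := by linarith
      have p2 : (0:ℝ) < 1 - s := by linarith
      have hq : (1:ℝ)-s^2 ≠ 0 := by nlinarith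
      have key : 1/(1+s) + 1/(1-s) = 2/(1-s^2) := by
        field_simp
        ring
      rw [key]
      have hs2c : s^2 < c := by
        calc s^2 < t0^2 := by nlinarith
        _ = c := ht0sq
      have hgt : 1/(2*Real.log 2) < 1 - s^2 := by
        simp only [hc] at hs2c; linarith
      have hmul := mul_lt_mul_of_pos_left hgt (show (0:ℝ) < 4*Real.log 2 by linarith)
      rw [h4L2] at hmul
      have hpos : (0:ℝ) < 1 - s^2 := by nlinarith
      have : 2/(1-s^2) < 4*Real.log 2 := by
        rw [div_lt_iff₀ hpos]
        nlinarith
      linarith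
  have hE'0 : Ef' 0 = 0 := by simp [Ef']
  -- Ef strict mono on Icc 0 t0
  have hEmono : StrictMonoOn Ef (Icc 0 t0) := by
    apply strictMonoOn_of_deriv_pos (convex_Icc 0 t0)
    · intro s hs
      have h1 : (-1:ℝ) < s := by linarith [hs.1]
      have h2 : s < 1 := by linarith [hs.2]
      exact (Ef_hasDeriv h1 h2).continuousAt.continuousWithinAt
    · intro s hs
      rw [interior_Icc] at hs
      obtain ⟨hs1, hs2⟩ := hs
      have h2 : s < 1 := by linarith
      have h1 : (-1:ℝ) < s := by linarith
      rw [(Ef_hasDeriv h1 h2).deriv]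
      have := hE'mono (left_mem_Icc.2 ht0.le) (⟨hs1.le, hs2.le⟩ : s ∈ Icc 0 t0) hs1
      rw [hE'0] at this
      exact this
  have hE0 : Ef 0 = 0 := by simp [Ef, Gf]
  have hEpos0 : ∀ s ∈ Ioc (0:ℝ) t0, 0 < Ef s := by
    intro s hs
    have := hEmono (left_mem_Icc.2 ht0.le) (⟨hs.1.le, hs.2⟩ : s ∈ Icc 0 t0) hs.1
    rwa [hE0] at this
  have hE1 : Ef 1 = 0 := by
    simp only [Ef, Gf]
    norm_num
  -- Concavity on Icc t0 1
  have hconc : ConcaveOn ℝ (Icc t0 1) Ef := by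
    apply concaveOn_of_hasDerivWithinAt2_nonpos (convex_Icc t0 1)
      ((continuous_const.mul (continuous_pow 2)).sub Gf_cont).continuousOn
      (f' := Ef')
    · intro s hs
      rw [interior_Icc] at hs
      have h1 : (-1:ℝ) < s := by linarith [hs.1]
      exact (Ef_hasDeriv h1 hs.2).hasDerivWithinAt
    · intro s hs
      rw [interior_Icc] at hs
      have h1 : (-1:ℝ) < s := by linarith [hs.1]
      exact (Ef'_hasDeriv h1 hs.2).hasDerivWithinAt
    · intro s hs
      rw [interior_Icc] at hs
      obtain ⟨hs1, hs2⟩ := hs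
      have p1 : (0:ℝ) < 1 + s := by linarith
      have p2 : (0:ℝ) < 1 - s := by linarith
      have hq : (1:ℝ)-s^2 ≠ 0 := by nlinarith
      have key : 1/(1+s) + 1/(1-s) = 2/(1-s^2) := by
        field_simp
        ring
      rw [key]
      have hs2c : c < s^2 := by
        calc c = t0^2 := ht0sq.symm
        _ < s^2 := by nlinarith
      have hlt : 1 - s^2 < 1/(2*Real.log 2) := by
        simp only [hc] at hs2c; linarith
      have hpos : (0:ℝ) < 1 - s^2 := by nlinarith
      have : 4*Real.log 2 ≤ 2/(1-s^2) := by
        rw [le_div_iff₀ hpos]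
        have hmul := mul_lt_mul_of_pos_left hlt (show (0:ℝ) < 4*Real.log 2 by linarith)
        rw [h4L2] at hmul
        linarith
      linarith
  -- conclude 0 < Ef t for t ∈ Ioo 0 1
  have hEpos : 0 < Ef t := by
    rcases le_or_gt t t0 with h | h
    · exact hEpos0 t ⟨ht.1, h⟩
    · -- chord argument on [t0, 1]
      set a : ℝ := (1-t)/(1-t0) with ha_def
      set b : ℝ := (t-t0)/(1-t0) with hb_def
      have hden : (0:ℝ) < 1 - t0 := by linarith
      have ha : 0 < a := div_pos (by linarith [ht.2]) hden
      have hb : 0 ≤ b := div_nonneg (by linarith) hden.le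
      have hab : a + b = 1 := by
        rw [ha_def, hb_def, ← add_div, div_eq_one_iff_eq hden.ne']
        ring
      have hcomb := hconc.2 (left_mem_Icc.2 (by linarith)) (right_mem_Icc.2 (by linarith))
        ha.le hb hab
      have hpt : a • t0 + b • (1:ℝ) = t := by
        simp only [smul_eq_mul, ha_def, hb_def]
        field_simp
        ring
      rw [hpt] at hcomb
      have hEt0 : 0 < Ef t0 := hEpos0 t0 ⟨ht0, le_refl t0⟩
      have : 0 < a • Ef t0 + b • Ef 1 := by
        rw [hE1]
        simp only [smul_eq_mul, mul_zero, add_zero]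
        exact mul_pos ha hEt0
      linarith
  simp only [Ef] at hEpos
  linarith

theorem stmt_14 (x : ℝ) (hx : 0 < x) :
    1 / 2 < x / Real.tanh x - Real.log (Real.cosh x) / Real.tanh x ^ 2 ∧
    x / Real.tanh x - Real.log (Real.cosh x) / Real.tanh x ^ 2 < Real.log 2 := by
  set t := Real.tanh x with htdef
  set L := Real.log (Real.cosh x) with hLdef
  have hc := Real.cosh_pos x
  have ht0 : 0 < t := by
    rw [htdef, Real.tanh_eq_sinh_div_cosh]
    exact div_pos (by rwa [Real.sinh_pos_iff]) hc
  have ht1 : t < 1 := by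
    rw [htdef, Real.tanh_eq_sinh_div_cosh]
    exact (div_lt_one hc).2 (Real.sinh_lt_cosh x)
  have h1 : Real.log (1+t) = x - L := by
    have h : 1 + t = Real.exp x / Real.cosh x := by
      rw [htdef, Real.tanh_eq_sinh_div_cosh, ← Real.cosh_add_sinh]
      field_simp
    rw [h, Real.log_div (Real.exp_ne_zero x) hc.ne', Real.log_exp, hLdef]
  have h2 : Real.log (1-t) = -x - L := by
    have h : 1 - t = Real.exp (-x) / Real.cosh x := by
      rw [htdef, Real.tanh_eq_sinh_div_cosh, ← Real.cosh_sub_sinh]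
      field_simp
    rw [h, Real.log_div (Real.exp_ne_zero _) hc.ne', Real.log_exp, hLdef]
  have hGfval : Gf t = 2*(t*x - L) := by
    simp only [Gf, h1, h2]
    ring
  have ht2 : (0:ℝ) < t^2 := by positivity
  have htne : t ≠ 0 := ht0.ne'
  have heq : x / t - L / t^2 = (t*x - L)/t^2 := by
    field_simp
  rw [heq]
  constructor
  · rw [lt_div_iff₀ ht2]
    have h := Gf_lower ⟨ht0, ht1⟩
    rw [hGfval] at h
    linarith
  · rw [div_lt_iff₀ ht2]
    have h := Gf_upper ⟨ht0, ht1⟩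
    rw [hGfval] at h
    linarith
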